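/- With a_0 = 1, a_{n+1} = a_n ā_n ā_n a_n a_n, c_n = a_n a_n a_n a_n, and ω = c_0 c_1 c_2 ⋯: for every n > 0, the string c_n does not occur in the suffix ω[5^{n+1}−1, ∞). -/

import Mathlib

/-- The factor of `ω` starting at `i` of length `n`. -/
def seg {α : Type*} (ω : ℕ → α) (i n : ℕ) : List α :=
  (List.range n).map (fun k => ω (i + k))

/-- `x` occurs in `ω` at position `i`. -/
def OccursAt {α : Type*} (ω : ℕ → α) (x : List α) (i : ℕ) : Prop :=
  seg ω i x.length = x

/-- Strongly almost periodic: every factor occurs in every sufficiently long factor. -/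
def SAP {α : Type*} (ω : ℕ → α) : Prop :=
  ∀ x : List α, (∃ i, OccursAt ω x i) →
    ∃ l, ∀ j, ∃ i, j ≤ i ∧ i + x.length ≤ j + l ∧ OccursAt ω x i

/-- Almost periodic: every factor occurring infinitely often occurs in every
sufficiently long factor. -/
def AP {α : Type*} (ω : ℕ → α) : Prop :=
  ∀ x : List α, {i | OccursAt ω x i}.Infinite →
    ∃ l, ∀ j, ∃ i, j ≤ i ∧ i + x.length ≤ j + l ∧ OccursAt ω x i

/-- Eventually strongly almost periodic: some suffix is strongly almost periodic. -/
def EAP {α : Type*} (ω : ℕ → α) : Prop :=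
  ∃ n, SAP (fun i => ω (n + i))

/-- `a_0 = 1`, `a_{n+1} = a_n ā_n ā_n a_n a_n`. -/
def aStr : ℕ → List Bool
  | 0 => [true]
  | n + 1 => aStr n ++ (aStr n).map (fun b => !b) ++ (aStr n).map (fun b => !b)
      ++ aStr n ++ aStr n

/-- `c_n = a_n a_n a_n a_n`. -/
def cStr (n : ℕ) : List Bool := aStr n ++ aStr n ++ aStr n ++ aStr n

/-- The prefix `c_0 c_1 ⋯ c_{n-1}` of the sequence `ω`. -/
def prefW (n : ℕ) : List Bool := ((List.range n).map cStr).flatten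

/-- The sequence `ω = c_0 c_1 c_2 ⋯` (note `|prefW (i+1)| = 5^{i+1} - 1 > i`). -/
def omegaAP (i : ℕ) : Bool := (prefW (i + 1)).getD i false

/- ### infrastructure -/

def cmpl (l : List Bool) : List Bool := l.map (fun b => !b)

def blk (n : ℕ) (b : Bool) : List Bool := if b then aStr n else cmpl (aStr n)

def expn (n : ℕ) (w : List Bool) : List Bool := w.flatMap (blk n)

@[simp] lemma length_cmpl (l : List Bool) : (cmpl l).length = l.length := by
  simp [cmpl]

@[simp] lemma length_aStr (n : ℕ) : (aStr n).length = 5 ^ n := by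
  induction n with
  | zero => rfl
  | succ n ih => simp [aStr, ih, pow_succ]; ring

@[simp] lemma length_blk (n : ℕ) (b : Bool) : (blk n b).length = 5 ^ n := by
  cases b <;> simp [blk]

@[simp] lemma length_cStr (n : ℕ) : (cStr n).length = 4 * 5 ^ n := by
  simp [cStr]; ring

@[simp] lemma expn_nil (n : ℕ) : expn n [] = [] := rfl

@[simp] lemma expn_cons (n : ℕ) (b : Bool) (w : List Bool) :
    expn n (b :: w) = blk n b ++ expn n w := rfl

lemma expn_append (n : ℕ) (w1 w2 : List Bool) :
    expn n (w1 ++ w2) = expn n w1 ++ expn n w2 := List.flatMap_append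

@[simp] lemma length_expn (n : ℕ) (w : List Bool) :
    (expn n w).length = 5 ^ n * w.length := by
  induction w with
  | nil => simp
  | cons b w ih => simp [ih]; ring

@[simp] lemma cmpl_cmpl (l : List Bool) : cmpl (cmpl l) = l := by
  have : ((fun b => !b) ∘ fun b : Bool => !b) = id := by funext x; simp
  simp [cmpl, this]

lemma cmpl_append (l1 l2 : List Bool) : cmpl (l1 ++ l2) = cmpl l1 ++ cmpl l2 := by
  simp [cmpl]

lemma blk_not (n : ℕ) (b : Bool) : blk n (!b) = cmpl (blk n b) := by
  cases b <;> simp [blk]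

lemma expn_cmpl (n : ℕ) (w : List Bool) : expn n (cmpl w) = cmpl (expn n w) := by
  induction w with
  | nil => simp [cmpl]
  | cons b w ih =>
    have : cmpl (b :: w) = (!b) :: cmpl w := rfl
    rw [this, expn_cons, expn_cons, ih, blk_not, cmpl_append]

lemma aStr_add (n k : ℕ) : aStr (n + k) = expn n (aStr k) := by
  induction k with
  | zero => simp [aStr, expn, blk]
  | succ k ih =>
    have hc : ∀ l : List Bool, l.map (fun b => !b) = cmpl l := fun _ => rfl
    have h1 : aStr (n + (k+1)) = aStr (n+k) ++ cmpl (aStr (n+k)) ++ cmpl (aStr (n+k))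
        ++ aStr (n+k) ++ aStr (n+k) := by
      show aStr ((n+k)+1) = _
      rw [aStr, hc]
    have h2 : aStr (k+1) = aStr k ++ cmpl (aStr k) ++ cmpl (aStr k) ++ aStr k ++ aStr k := by
      rw [aStr, hc]
    rw [h1, h2, expn_append, expn_append, expn_append, expn_append, ih, expn_cmpl]

lemma aStr_getD_zero (n : ℕ) : (aStr n).getD 0 false = true := by
  induction n with
  | zero => rfl
  | succ n ih =>
    have h1 : aStr (n+1) = aStr n ++ ((aStr n).map (fun b => !b) ++ (aStr n).map (fun b => !b)
        ++ aStr n ++ aStr n) := by rw [aStr]; simp [List.append_assoc]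
    rw [h1, List.getD_append _ _ _ _ (by simp), ih]

lemma blk_getD_zero (n : ℕ) (b : Bool) : (blk n b).getD 0 false = b := by
  have hl : 0 < (aStr n).length := by simp
  have ha := aStr_getD_zero n
  rw [List.getD_eq_getElem _ _ hl] at ha
  cases b with
  | true => show (aStr n).getD 0 false = true; exact aStr_getD_zero n
  | false =>
    show (cmpl (aStr n)).getD 0 false = false
    rw [List.getD_eq_getElem _ _ (by simp)]
    simp [cmpl, ha]

lemma getD_expn (n : ℕ) (w : List Bool) (m : ℕ) (hm : m < 5 ^ n * w.length) :
    (expn n w).getD m false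
      = (blk n (w.getD (m / 5 ^ n) false)).getD (m % 5 ^ n) false := by
  induction w generalizing m with
  | nil => simp at hm
  | cons b w ih =>
    have hN : 0 < 5 ^ n := by positivity
    rw [expn_cons]
    by_cases h : m < 5 ^ n
    · rw [List.getD_append _ _ _ _ (by simpa using h), Nat.div_eq_of_lt h,
        Nat.mod_eq_of_lt h, List.getD_cons_zero]
    · push_neg at h
      rw [List.getD_append_right _ _ _ _ (by simpa using h), length_blk]
      have hm' : m - 5 ^ n < 5 ^ n * w.length := by
        have h2 : (5:ℕ) ^ n * (b::w).length = 5 ^ n * w.length + 5 ^ n := by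
          simp [Nat.mul_succ]
        omega
      rw [ih _ hm', Nat.div_eq_sub_div hN h, Nat.mod_eq_sub_mod h, List.getD_cons_succ]

lemma cStr_expn (n : ℕ) : cStr n = expn n [true, true, true, true] := by
  simp [cStr, expn, blk]

lemma cStr_add (n k : ℕ) : cStr (n + k) = expn n (cStr k) := by
  simp only [cStr, aStr_add, expn_append]

lemma prefW_succ (M : ℕ) : prefW (M + 1) = prefW M ++ cStr M := by
  simp [prefW, List.range_succ]

@[simp] lemma length_prefW (M : ℕ) : (prefW M).length = 5 ^ M - 1 := by
  induction M with
  | zero => rfl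
  | succ M ih =>
    have : 1 ≤ 5 ^ M := Nat.one_le_pow _ _ (by norm_num)
    rw [prefW_succ]
    simp [ih, pow_succ]
    omega

lemma prefW_getD_stable {M M' : ℕ} (h : M ≤ M') {j : ℕ} (hj : j < (prefW M).length) :
    (prefW M').getD j false = (prefW M).getD j false := by
  induction M' with
  | zero => interval_cases M; rfl
  | succ M' ih =>
    rcases Nat.lt_or_ge M (M' + 1) with h' | h'
    · rw [prefW_succ, List.getD_append _ _ _ _
        (by exact lt_of_lt_of_le hj (by simp; have : (5:ℕ)^M ≤ 5^M' := Nat.pow_le_pow_right (by norm_num) (by omega); omega))]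
      exact ih (by omega)
    · have : M = M' + 1 := le_antisymm h h'
      subst this; rfl

lemma omega_getD {M i : ℕ} (h : i < (prefW M).length) :
    omegaAP i = (prefW M).getD i false := by
  have hi : i < (prefW (i + 1)).length := by
    simp
    have := Nat.lt_pow_self (n := i + 1) (a := 5) (by norm_num)
    omega
  rcases le_total M (i + 1) with hM | hM
  · rw [omegaAP, prefW_getD_stable hM h]
  · rw [omegaAP, ← prefW_getD_stable hM hi]
def tailP (K : ℕ) : List Bool := ((List.range K).map (fun j => cStr (j + 1))).flatten

lemma tailP_succ (K : ℕ) : tailP (K + 1) = tailP K ++ cStr (K + 1) := by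
  simp [tailP, List.range_succ]

@[simp] lemma length_tailP (K : ℕ) : (tailP K).length = 5 ^ (K + 1) - 5 := by
  induction K with
  | zero => rfl
  | succ K ih =>
    have h5 : (5:ℕ) ≤ 5 ^ (K + 1) := Nat.le_self_pow (by omega) 5
    have he : (5:ℕ) ^ (K + 1 + 1) = 5 * 5 ^ (K + 1) := by ring
    rw [tailP_succ, List.length_append, ih, length_cStr, he]
    omega

lemma prefW_eq_c0_tailP (K : ℕ) : prefW (K + 1) = cStr 0 ++ tailP K := by
  induction K with
  | zero => simp [prefW, tailP, List.range_succ]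
  | succ K ih => rw [prefW_succ, ih, tailP_succ, List.append_assoc]

lemma prefW_decomp (n K : ℕ) : prefW (n + 1 + K) = prefW (n + 1) ++ expn n (tailP K) := by
  induction K with
  | zero => simp [tailP]
  | succ K ih =>
    have h1 : n + 1 + (K + 1) = (n + 1 + K) + 1 := by omega
    have h2 : n + 1 + K = n + (K + 1) := by omega
    rw [h1, prefW_succ, ih, h2, cStr_add, List.append_assoc, ← expn_append, ← tailP_succ]

def delta (i : ℕ) : Bool := omegaAP (4 + i)

lemma delta_eq_tailP {K j : ℕ} (hj : j < (tailP K).length) :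
    delta j = (tailP K).getD j false := by
  have h4 : (cStr 0).length = 4 := rfl
  have hlen : 4 + j < (prefW (K + 1)).length := by
    rw [prefW_eq_c0_tailP, List.length_append, h4]; omega
  rw [delta, omega_getD hlen, prefW_eq_c0_tailP,
    List.getD_append_right _ _ _ _ (by omega), h4]
  congr 1
  omega

lemma five_pow_big (m : ℕ) : m + 5 < 5 ^ (m + 2) := by
  induction m with
  | zero => norm_num
  | succ m ih =>
    have h1 : (5:ℕ) ^ (m + 2) < 5 ^ (m + 3) := Nat.pow_lt_pow_right (by norm_num) (by omega)
    have e : m + 1 + 2 = m + 3 := rfl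
    rw [e]
    omega

/-- The main structure formula. -/
lemma F1 (n m : ℕ) :
    omegaAP (5 ^ (n + 1) - 1 + m)
      = (blk n (delta (m / 5 ^ n))).getD (m % 5 ^ n) false := by
  have hN : 0 < 5 ^ n := by positivity
  have htK : m < (tailP (m + 1)).length := by
    rw [length_tailP]
    have := five_pow_big m
    have e : m + 1 + 1 = m + 2 := rfl
    rw [e]
    omega
  have hmN : m < 5 ^ n * (tailP (m + 1)).length := by
    calc m < (tailP (m + 1)).length := htK
    _ ≤ 5 ^ n * (tailP (m + 1)).length := Nat.le_mul_of_pos_left _ hN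
  have hlen : 5 ^ (n + 1) - 1 + m < (prefW (n + 1 + (m + 1))).length := by
    rw [prefW_decomp, List.length_append, length_prefW, length_expn]
    have h1 : 1 ≤ (5:ℕ) ^ (n + 1) := Nat.one_le_pow _ _ (by norm_num)
    omega
  rw [omega_getD hlen, prefW_decomp,
    List.getD_append_right _ _ _ _ (by simp), length_prefW]
  have hidx : 5 ^ (n + 1) - 1 + m - (5 ^ (n + 1) - 1) = m := by omega
  rw [hidx, getD_expn n _ m hmN,
    ← delta_eq_tailP (lt_of_le_of_lt (Nat.div_le_self m _) htK)]
def MatchAt (x l : List Bool) (t : ℕ) : Prop :=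
  ∀ j, j < x.length → x.getD j false = l.getD (t + j) false

instance (x l : List Bool) (t : ℕ) : Decidable (MatchAt x l t) := by
  unfold MatchAt; infer_instance

lemma sync_one (b c : Bool) (t : ℕ) (ht0 : 0 < t) (ht5 : t < 5) :
    ¬ MatchAt (aStr 1) (blk 1 b ++ blk 1 c) t := by
  revert b c
  interval_cases t <;> decide

lemma two_block (n : ℕ) (e : ℕ → Bool) (s r j : ℕ) (hr : r < 5 ^ n) (hj : j < 5 ^ n) :
    (blk n (e ((5 ^ n * s + r + j) / 5 ^ n))).getD ((5 ^ n * s + r + j) % 5 ^ n) false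
      = (blk n (e s) ++ blk n (e (s + 1))).getD (r + j) false := by
  have hN : 0 < 5 ^ n := by positivity
  have hd : (5 ^ n * s + r + j) / 5 ^ n = s + (r + j) / 5 ^ n := by
    rw [Nat.add_assoc, Nat.mul_add_div hN]
  have hm : (5 ^ n * s + r + j) % 5 ^ n = (r + j) % 5 ^ n := by
    rw [Nat.add_assoc, Nat.mul_add_mod]
  rw [hd, hm]
  by_cases h : r + j < 5 ^ n
  · rw [Nat.div_eq_of_lt h, Nat.mod_eq_of_lt h, Nat.add_zero,
      List.getD_append _ _ _ _ (by simpa using h)]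
  · push_neg at h
    have hd2 : (r + j) / 5 ^ n = 1 := by
      rw [Nat.div_eq_sub_div hN h, Nat.div_eq_of_lt (by omega)]
    have hm2 : (r + j) % 5 ^ n = r + j - 5 ^ n := by
      rw [Nat.mod_eq_sub_mod h, Nat.mod_eq_of_lt (by omega)]
    rw [hd2, hm2, List.getD_append_right _ _ _ _ (by simpa using h), length_blk]

lemma blk_succ (n : ℕ) (b : Bool) : blk (n + 1) b = expn n (blk 1 b) := by
  have h1 : aStr (n + 1) = expn n (aStr 1) := aStr_add n 1
  cases b with
  | true => simpa [blk] using h1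
  | false =>
    show cmpl (aStr (n + 1)) = expn n (cmpl (aStr 1))
    rw [expn_cmpl, h1]

lemma blk_true (n : ℕ) : blk n true = aStr n := rfl

lemma a1_getD_zero : (aStr 1).getD 0 false = true := rfl

lemma sync : ∀ n, 1 ≤ n → ∀ (b c : Bool) (t : ℕ), 0 < t → t < 5 ^ n →
    ¬ MatchAt (aStr n) (blk n b ++ blk n c) t := by
  intro n hn
  induction n, hn using Nat.le_induction with
  | base =>
    intro b c t ht0 ht5
    exact sync_one b c t ht0 (by simpa using ht5)
  | succ n hn ih =>
    intro b c t ht0 ht5 hM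
    have hN : 0 < 5 ^ n := by positivity
    have hNN : (5:ℕ) ^ (n + 1) = 5 ^ n * 5 := by ring
    set W : List Bool := blk 1 b ++ blk 1 c with hW
    have hWlen : W.length = 10 := by simp [hW]
    have ht5' : t < 5 ^ n * 5 := by rw [← hNN]; exact ht5
    have hbc : blk (n + 1) b ++ blk (n + 1) c = expn n W := by
      rw [show blk (n + 1) b = expn n (blk 1 b) from blk_succ n b,
        show blk (n + 1) c = expn n (blk 1 c) from blk_succ n c, hW, expn_append]
    have hA : aStr (n + 1) = expn n (aStr 1) := aStr_add n 1
    have hMA : ∀ j, j < 5 ^ (n + 1) →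
        (expn n (aStr 1)).getD j false = (expn n W).getD (t + j) false := by
      intro j hj
      have := hM j (by simpa using hj)
      rwa [hA, hbc] at this
    have hbig : ∀ m, m < 10 * 5 ^ n →
        (expn n W).getD m false = (blk n (W.getD (m / 5 ^ n) false)).getD (m % 5 ^ n) false := by
      intro m hm
      exact getD_expn n W m (by rw [hWlen]; omega)
    obtain ⟨s, r, hrN, hts⟩ : ∃ s r, r < 5 ^ n ∧ t = 5 ^ n * s + r :=
      ⟨t / 5 ^ n, t % 5 ^ n, Nat.mod_lt _ hN, (Nat.div_add_mod t (5 ^ n)).symm⟩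
    have hs4 : s ≤ 4 := by
      by_contra hcon
      push_neg at hcon
      have h55 : 5 * 5 ^ n ≤ 5 ^ n * s := by
        calc 5 * 5 ^ n ≤ s * 5 ^ n := Nat.mul_le_mul_right _ (by omega)
        _ = 5 ^ n * s := Nat.mul_comm _ _
      omega
    by_cases hr0 : r = 0
    · -- aligned occurrence: a_1 occurs in W at offset s
      have hs0 : 0 < s := by
        rcases Nat.eq_zero_or_pos s with h | h
        · subst h; simp at hts; omega
        · exact h
      apply sync_one b c s hs0 (by omega)
      intro j' hj'
      have hj'5 : j' < 5 := by simpa using hj'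
      have hjN : j' * 5 ^ n < 5 ^ n * 5 := by
        rw [Nat.mul_comm]; exact (Nat.mul_lt_mul_left hN).mpr hj'5
      have h2 := hMA (j' * 5 ^ n) (by omega)
      rw [getD_expn n (aStr 1) _ (by simpa using hjN),
        Nat.mul_div_cancel _ hN, Nat.mul_mod_left] at h2
      rw [hbig (t + j' * 5 ^ n) (by omega)] at h2
      have hsum : t + j' * 5 ^ n = 5 ^ n * (s + j') := by
        rw [hts, hr0, Nat.add_zero, Nat.mul_add, Nat.mul_comm (5 ^ n) j']
      rw [hsum, Nat.mul_div_cancel_left _ hN, Nat.mul_mod_right] at h2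
      rw [blk_getD_zero, blk_getD_zero] at h2
      exact h2
    · -- unaligned: a_n occurs in two n-blocks at offset r
      apply ih (W.getD s false) (W.getD (s + 1) false) r (by omega) hrN
      intro j hj
      have hj5 : j < 5 ^ n := by simpa using hj
      have hLa : (aStr n).getD j false = (expn n (aStr 1)).getD j false := by
        rw [getD_expn n (aStr 1) j (by calc j < 5 ^ n := hj5
              _ ≤ 5 ^ n * (aStr 1).length := Nat.le_mul_of_pos_right _ (by simp)),
          Nat.div_eq_of_lt hj5, Nat.mod_eq_of_lt hj5, a1_getD_zero, blk_true]
      rw [hLa, hMA j (by omega), hbig (t + j) (by omega), hts]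
      exact two_block n (fun k => W.getD k false) s r j hrN hj5
lemma blk1_dec : ∀ (x y : Bool) (r : ℕ), r < 5 →
    ¬ (∀ j, j < 4 → (blk 1 (if r + j < 5 then x else y)).getD ((r + j) % 5) false = true) := by
  decide

lemma no4 (e : ℕ → Bool) (u r : ℕ) (hr : r < 5)
    (H : ∀ j, j < 4 →
      (blk 1 (e ((5 * u + r + j) / 5))).getD ((5 * u + r + j) % 5) false = true) : False := by
  apply blk1_dec (e u) (e (u + 1)) r hr
  intro j hj
  have h := H j hj
  have e1 : (5 * u + r + j) / 5 = u + (r + j) / 5 := by omega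
  have e2 : (5 * u + r + j) % 5 = (r + j) % 5 := by omega
  rw [e1, e2] at h
  by_cases h5 : r + j < 5
  · rw [if_pos h5]
    rwa [show (r + j) / 5 = 0 by omega, Nat.add_zero] at h
  · rw [if_neg h5]
    rwa [show (r + j) / 5 = 1 by omega] at h

lemma deltaA (q : ℕ) :
    ¬ (delta q = true ∧ delta (q + 1) = true ∧ delta (q + 2) = true ∧ delta (q + 3) = true) := by
  rintro ⟨h0, h1, h2, h3⟩
  by_cases hq : q < 20
  · have key : ∀ j, j < 24 → delta j = (prefW 3).getD (4 + j) false := by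
      intro j hj
      exact omega_getD (by rw [length_prefW]; norm_num; omega)
    have D : ∀ q', q' < 20 → (prefW 3).getD (4 + q') false = true →
        (prefW 3).getD (4 + (q' + 1)) false = true →
        (prefW 3).getD (4 + (q' + 2)) false = true →
        (prefW 3).getD (4 + (q' + 3)) false = true → False := by decide
    rw [key q (by omega)] at h0
    rw [key (q + 1) (by omega)] at h1
    rw [key (q + 2) (by omega)] at h2
    rw [key (q + 3) (by omega)] at h3
    exact D q hq h0 h1 h2 h3
  · push_neg at hq
    have key2 : ∀ k, delta (20 + k) = (blk 1 (delta (k / 5))).getD (k % 5) false := by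
      intro k
      have e1 : delta (20 + k) = omegaAP (5 ^ (1 + 1) - 1 + k) := by
        rw [delta]; congr 1; norm_num; omega
      rw [e1, F1 1 k, pow_one]
    have hall : ∀ j, j < 4 → delta (q + j) = true := by
      intro j hj
      interval_cases j
      · simpa using h0
      · exact h1
      · exact h2
      · exact h3
    apply no4 delta ((q - 20) / 5) ((q - 20) % 5) (by omega)
    intro j hj
    have hd := hall j hj
    rw [show q + j = 20 + (5 * ((q - 20) / 5) + (q - 20) % 5 + j) by omega] at hd
    rw [key2] at hd
    exact hd

lemma occursAt_getD {ω : ℕ → Bool} {x : List Bool} {i : ℕ} (h : OccursAt ω x i)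
    {j : ℕ} (hj : j < x.length) : x.getD j false = ω (i + j) := by
  have h2 : (seg ω i x.length).getD j false = ω (i + j) := by
    unfold seg
    rw [List.getD_eq_getElem _ _ (by simpa using hj)]
    simp
  rw [h] at h2
  exact h2

/-- For every `n > 0`, the string `c_n` does not occur in the suffix
`ω[5^{n+1} - 1, ∞)` of `ω = c_0 c_1 c_2 ⋯`. -/
theorem cStr_not_in_suffix (n : ℕ) (hn : 0 < n) :
    ¬ ∃ i, OccursAt (fun k => omegaAP (5 ^ (n + 1) - 1 + k)) (cStr n) i := by
  rintro ⟨i, hocc⟩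
  have hN : 0 < 5 ^ n := by positivity
  have hlen : (cStr n).length = 4 * 5 ^ n := length_cStr n
  have hpt : ∀ j, j < 4 * 5 ^ n →
      (cStr n).getD j false = (blk n (delta ((i + j) / 5 ^ n))).getD ((i + j) % 5 ^ n) false := by
    intro j hj
    have h := occursAt_getD hocc (x := cStr n) (by rw [hlen]; exact hj)
    rw [h, F1 n (i + j)]
  have hc : ∀ m, m < 4 * 5 ^ n → (cStr n).getD m false
      = (blk n (([true, true, true, true] : List Bool).getD (m / 5 ^ n) false)).getD
          (m % 5 ^ n) false := by
    intro m hm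
    rw [cStr_expn, getD_expn n _ m (by rw [show ([true,true,true,true]:List Bool).length = 4 from rfl]; omega)]
  obtain ⟨s, r, hrN, hi⟩ : ∃ s r, r < 5 ^ n ∧ i = 5 ^ n * s + r :=
    ⟨i / 5 ^ n, i % 5 ^ n, Nat.mod_lt _ hN, (Nat.div_add_mod i (5 ^ n)).symm⟩
  by_cases hr0 : r = 0
  · -- aligned
    have hblock : ∀ j', j' < 4 → delta (s + j') = true := by
      intro j' h4
      have hb1 : j' * 5 ^ n < 4 * 5 ^ n := by
        have := (Nat.mul_lt_mul_right hN).mpr h4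
        omega
      have h := hpt (j' * 5 ^ n) hb1
      rw [hc (j' * 5 ^ n) hb1] at h
      rw [Nat.mul_div_cancel _ hN, Nat.mul_mod_left] at h
      have hj'T : ([true, true, true, true] : List Bool).getD j' false = true := by
        interval_cases j' <;> rfl
      rw [hj'T, blk_getD_zero] at h
      have hsum : i + j' * 5 ^ n = 5 ^ n * (s + j') := by
        rw [hi, hr0, Nat.add_zero, Nat.mul_add, Nat.mul_comm (5 ^ n) j']
      rw [hsum, Nat.mul_div_cancel_left _ hN, Nat.mul_mod_right, blk_getD_zero] at h
      exact h.symm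
    exact deltaA s ⟨by simpa using hblock 0 (by omega), hblock 1 (by omega),
      hblock 2 (by omega), hblock 3 (by omega)⟩
  · -- unaligned
    apply sync n hn (delta s) (delta (s + 1)) r (by omega) hrN
    intro j hj
    have hj5 : j < 5 ^ n := by simpa using hj
    have hj4 : j < 4 * 5 ^ n := by omega
    have hLa : (aStr n).getD j false = (cStr n).getD j false := by
      rw [hc j hj4, Nat.div_eq_of_lt hj5, Nat.mod_eq_of_lt hj5]
      rfl
    rw [hLa, hpt j hj4, hi]
    exact two_block n delta s r j hrN hj5
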